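/- Let F : ℂⁿ → ℂᵐ be a polynomial map of degree ≤ 3, and β, γ ∈ ℂⁿ with γ ≠ 0. If the map μ ↦ F(β + μγ) is injective on ℂ and (JF)(α) · γ ≠ 0 for all α ∈ {β + μγ : μ ∈ ℂ}, then there exists v ∈ ℂᵐ such that ∑_{j=1}^m v_j · d/dT(F_j(β + Tγ)) = 1, i.e., F restricted to the line is linearly rectifiable. -/

import Mathlib

open MvPolynomial

/-- The Jacobian matrix of a polynomial map `F : ℂⁿ → ℂᵐ`, evaluated at `α`. -/
noncomputable def jacEval {n m : ℕ} (F : Fin m → MvPolynomial (Fin n) ℂ)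
    (α : Fin n → ℂ) : Matrix (Fin m) (Fin n) ℂ :=
  Matrix.of fun i j => eval α (pderiv j (F i))

/-- The restriction of (the `j`-th component of) `F` to the line `β + ℂ·γ`,
as a polynomial in one variable `T`. -/
noncomputable def lineComp {n m : ℕ} (F : Fin m → MvPolynomial (Fin n) ℂ)
    (β γ : Fin n → ℂ) (j : Fin m) : Polynomial ℂ :=
  MvPolynomial.aeval (fun k => Polynomial.C (β k) + Polynomial.C (γ k) * Polynomial.X) (F j)

lemma eval_aeval_line {n : ℕ} (β γ : Fin n → ℂ) (μ : ℂ) (P : MvPolynomial (Fin n) ℂ) :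
    (MvPolynomial.aeval (fun k => Polynomial.C (β k) + Polynomial.C (γ k) * Polynomial.X) P).eval μ
      = eval (β + μ • γ) P := by
  have h := MvPolynomial.comp_aeval_apply
    (f := fun k : Fin n => Polynomial.C (β k) + Polynomial.C (γ k) * Polynomial.X)
    (Polynomial.aeval μ : Polynomial ℂ →ₐ[ℂ] ℂ) P
  simp only [Polynomial.coe_aeval_eq_eval] at h
  rw [h]
  simp only [Polynomial.eval_add, Polynomial.eval_mul, Polynomial.eval_C, Polynomial.eval_X]
  rw [show eval (β + μ • γ) P = aeval (β + μ • γ) P from (aeval_X_left_apply P ▸ rfl)]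
  have : (fun i => β i + γ i * μ) = β + μ • γ := by
    funext k; simp [Pi.add_apply, Pi.smul_apply, smul_eq_mul]; ring
  rw [this]

lemma deriv_aeval_line {n : ℕ} (β γ : Fin n → ℂ) (μ : ℂ) (P : MvPolynomial (Fin n) ℂ) :
    (Polynomial.derivative (MvPolynomial.aeval
        (fun k => Polynomial.C (β k) + Polynomial.C (γ k) * Polynomial.X) P)).eval μ
      = ∑ k, γ k * eval (β + μ • γ) (pderiv k P) := by
  induction P using MvPolynomial.induction_on with
  | C a => simp
  | add p q hp hq =>
      simp only [map_add, Polynomial.derivative_add, Polynomial.eval_add, hp, hq,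
        mul_add, Finset.sum_add_distrib]
  | mul_X p i hp =>
      simp only [map_mul, aeval_X, Polynomial.derivative_mul, Polynomial.eval_add,
        Polynomial.eval_mul, Polynomial.eval_C, Polynomial.eval_X, hp]
      rw [show Polynomial.derivative (Polynomial.C (β i) + Polynomial.C (γ i) * Polynomial.X)
          = Polynomial.C (γ i) by simp]
      simp only [Polynomial.eval_C, Polynomial.eval_add, Polynomial.eval_mul, Polynomial.eval_X]
      have he := eval_aeval_line β γ μ p
      rw [he]
      have : ∀ k : Fin n, (pderiv k) (p * X i) = (pderiv k p) * X i + p * (if i = k then 1 else 0) := by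
        intro k
        rw [pderiv_mul, pderiv_X]
        simp [Pi.single_apply]
      simp only [this, map_add, map_mul, eval_X, apply_ite (eval (β + μ • γ)), map_one,
        map_zero, mul_ite, mul_one, mul_zero, mul_add, Finset.sum_add_distrib,
        Finset.sum_ite_eq, Finset.mem_univ, if_true]
      have hx : (β + μ • γ) i = β i + γ i * μ := by
        simp [Pi.add_apply, Pi.smul_apply, smul_eq_mul]; ring
      rw [hx]
      have hs : ∀ x : Fin n, γ x * ((eval (β + μ • γ)) ((pderiv x) p) * (β i + γ i * μ))
          = γ x * (eval (β + μ • γ)) ((pderiv x) p) * β i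
            + γ x * (eval (β + μ • γ)) ((pderiv x) p) * (γ i * μ) := fun x => by ring
      simp only [hs, Finset.sum_add_distrib, ← Finset.sum_mul]
      ring

lemma lineComp_eval {n m : ℕ} (F : Fin m → MvPolynomial (Fin n) ℂ)
    (β γ : Fin n → ℂ) (j : Fin m) (μ : ℂ) :
    (lineComp F β γ j).eval μ = eval (β + μ • γ) (F j) :=
  eval_aeval_line β γ μ (F j)

lemma lineComp_deriv_eval {n m : ℕ} (F : Fin m → MvPolynomial (Fin n) ℂ)
    (β γ : Fin n → ℂ) (j : Fin m) (μ : ℂ) :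
    (Polynomial.derivative (lineComp F β γ j)).eval μ
      = ∑ k, γ k * eval (β + μ • γ) (pderiv k (F j)) :=
  deriv_aeval_line β γ μ (F j)

lemma lineComp_natDegree_le {n m : ℕ} (F : Fin m → MvPolynomial (Fin n) ℂ)
    (hdeg : ∀ i, (F i).totalDegree ≤ 3) (β γ : Fin n → ℂ) (j : Fin m) :
    (lineComp F β γ j).natDegree ≤ 3 := by
  have := MvPolynomial.aeval_natDegree_le (m := 3) (n := 1) (F j) (hdeg j)
    (fun k => Polynomial.C (β k) + Polynomial.C (γ k) * Polynomial.X) (fun k => by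
      apply le_trans (Polynomial.natDegree_add_le _ _)
      simp only [Polynomial.natDegree_C, max_le_iff]
      constructor
      · omega
      · exact le_trans (Polynomial.natDegree_C_mul_le _ _) (by simp))
  simpa [lineComp] using this

theorem stmt_7 (n m : ℕ) (F : Fin m → MvPolynomial (Fin n) ℂ)
    (hdeg : ∀ i, (F i).totalDegree ≤ 3)
    (β γ : Fin n → ℂ) (hγ : γ ≠ 0)
    (hinj : Function.Injective (fun μ : ℂ => fun i => eval (β + μ • γ) (F i)))
    (hjac : ∀ α : Fin n → ℂ, (∃ μ : ℂ, α = β + μ • γ) → (jacEval F α).mulVec γ ≠ 0) :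
    ∃ v : Fin m → ℂ,
      ∑ j, Polynomial.C (v j) * Polynomial.derivative (lineComp F β γ j) = 1 := by
  by_contra hcon
  push_neg at hcon
  set g : Fin m → Polynomial ℂ := fun j => Polynomial.derivative (lineComp F β γ j) with hgdef
  have hfdeg : ∀ j, (lineComp F β γ j).natDegree ≤ 3 := lineComp_natDegree_le F hdeg β γ
  have hgdeg : ∀ j, (g j).natDegree ≤ 2 := fun j =>
    le_trans (Polynomial.natDegree_derivative_le _) (by have := hfdeg j; omega)
  set w : Fin m → (Fin 3 → ℂ) := fun j i => (g j).coeff i.val with hwdef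
  set e : Fin 3 → ℂ := fun i => if i.val = 0 then 1 else 0 with hedef
  set W := Submodule.span ℂ (Set.range w) with hWdef
  -- e is not in the span of the w's
  have he : e ∉ W := by
    intro hmem
    rw [Submodule.mem_span_range_iff_exists_fun] at hmem
    obtain ⟨c, hc⟩ := hmem
    refine hcon c ?_
    apply Polynomial.ext
    intro N
    rw [Polynomial.finset_sum_coeff]
    simp only [Polynomial.coeff_C_mul, Polynomial.coeff_one]
    rcases Nat.lt_or_ge N 3 with hN | hN
    · have := congrFun hc ⟨N, hN⟩
      simp only [Finset.sum_apply, Pi.smul_apply, smul_eq_mul, hwdef, hedef] at this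
      simpa using this
    · have hz : ∀ j, (g j).coeff N = 0 := fun j =>
        Polynomial.coeff_eq_zero_of_natDegree_lt (by have := hgdeg j; omega)
      rw [if_neg (by omega : ¬ N = 0)]
      simp only [hgdef] at hz
      simp [hz]
  -- a linear functional vanishing on W but not at e
  have hq : W.mkQ e ≠ 0 := by
    simpa [Submodule.Quotient.mk_eq_zero] using he
  obtain ⟨φ, hφ⟩ : ∃ φ : Module.Dual ℂ ((Fin 3 → ℂ) ⧸ W), φ (W.mkQ e) ≠ 0 := by
    by_contra h
    push_neg at h
    exact hq ((Module.forall_dual_apply_eq_zero_iff ℂ _).mp h)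
  set ψ : Module.Dual ℂ (Fin 3 → ℂ) := φ.comp W.mkQ with hψdef
  have hψw : ∀ j, ψ (w j) = 0 := by
    intro j
    have hw : w j ∈ W := Submodule.subset_span ⟨j, rfl⟩
    have : W.mkQ (w j) = 0 := (Submodule.Quotient.mk_eq_zero W).mpr hw
    simp [hψdef, this]
  have hψe : ψ e ≠ 0 := hφ
  set r : Fin 3 → ℂ := fun i => ψ (fun j => if i = j then 1 else 0) with hrdef
  have hψ : ∀ x : Fin 3 → ℂ, ψ x = ∑ i, x i * r i := by
    intro x
    rw [LinearMap.pi_apply_eq_sum_univ]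
    simp [hrdef, smul_eq_mul]
  have hr0 : r 0 ≠ 0 := by
    intro h0
    apply hψe
    rw [hψ e]
    rw [Fin.sum_univ_three]
    simp [hedef, h0]
  set p : ℂ := r 2 / r 0 with hpdef
  set q : ℂ := r 1 / r 0 with hqdef
  have hrel : ∀ j, (g j).coeff 0 + (g j).coeff 1 * q + (g j).coeff 2 * p = 0 := by
    intro j
    have := hψw j
    rw [hψ (w j), Fin.sum_univ_three] at this
    simp only [hwdef] at this
    have this' : (g j).coeff 0 * r 0 + (g j).coeff 1 * r 1 + (g j).coeff 2 * r 2 = 0 := this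
    have h0inv : r 0 * (r 0)⁻¹ = 1 := mul_inv_cancel₀ hr0
    rw [hpdef, hqdef, div_eq_mul_inv, div_eq_mul_inv]
    linear_combination (r 0)⁻¹ * this' - (g j).coeff 0 * h0inv
  -- evaluations
  have hgev : ∀ j (x : ℂ), (g j).eval x
      = (g j).coeff 0 + (g j).coeff 1 * x + (g j).coeff 2 * x ^ 2 := by
    intro j x
    rw [Polynomial.eval_eq_sum_range' (lt_of_le_of_lt (hgdeg j) (by norm_num : (2:ℕ) < 3))]
    simp [Finset.sum_range_succ]
  by_cases hpq : p = q ^ 2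
  · -- the derivative vanishes at q, contradicting the Jacobian hypothesis
    refine hjac (β + q • γ) ⟨q, rfl⟩ (funext fun j => ?_)
    show ∑ k, jacEval F (β + q • γ) j k * γ k = 0
    have h1 : ∑ k, jacEval F (β + q • γ) j k * γ k
        = ∑ k, γ k * eval (β + q • γ) (pderiv k (F j)) := by
      apply Finset.sum_congr rfl
      intro k _
      simp [jacEval, mul_comm]
    rw [h1, ← lineComp_deriv_eval]
    show (g j).eval q = 0
    rw [hgev j q]
    have hrj := hrel j
    rw [hpq] at hrj
    linear_combination hrj
  · obtain ⟨s, hs⟩ := IsAlgClosed.exists_pow_nat_eq (3 * (p - q ^ 2)) (n := 2) (by norm_num)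
    have hs0 : s ≠ 0 := by
      intro h0
      apply hpq
      rw [h0] at hs
      have h3 : (3 : ℂ) * (p - q ^ 2) = 0 := by rw [← hs]; ring
      rcases mul_eq_zero.mp h3 with h | h
      · exact absurd h (by norm_num)
      · linear_combination h
    have hxy : q + s ≠ q - s := by
      intro h
      exact hs0 (by linear_combination h / 2)
    apply hxy
    apply hinj
    funext j
    show eval (β + (q + s) • γ) (F j) = eval (β + (q - s) • γ) (F j)
    rw [← lineComp_eval, ← lineComp_eval]
    have hfev : ∀ x : ℂ, (lineComp F β γ j).eval x
        = (lineComp F β γ j).coeff 0 + (lineComp F β γ j).coeff 1 * x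
          + (lineComp F β γ j).coeff 2 * x ^ 2 + (lineComp F β γ j).coeff 3 * x ^ 3 := by
      intro x
      rw [Polynomial.eval_eq_sum_range' (lt_of_le_of_lt (hfdeg j) (by norm_num : (3:ℕ) < 4))]
      simp [Finset.sum_range_succ]
    rw [hfev, hfev]
    have hd : ∀ k : ℕ, (g j).coeff k = (lineComp F β γ j).coeff (k + 1) * ((k : ℂ) + 1) := by
      intro k
      rw [hgdef]
      exact Polynomial.coeff_derivative _ _
    have hrj := hrel j
    rw [hd 0, hd 1, hd 2] at hrj
    push_cast at hrj
    linear_combination (2 * s) * hrj + 2 * s * ((lineComp F β γ j).coeff 3) * hs
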